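/- Corner angle bound for the double-layer Gauss integral over a small circular arc: let R > 0 and x_A = (−R, 0). Parametrize the lower circle by y(t) = R(cos t, sin t) with outward unit normal ν(y(t)) = (cos t, sin t) and arclength element R dt. Then there exists r₀ ∈ (0, R) such that for every r ∈ (0, r₀], every σ ∈ (0, 2 arcsin(r/(2R))] (so that the arc {y(t) : π < t < π + σ} consists of points of the circle with y₂ < 0 within distance r of x_A), and every x = (x₁, 0) with −R ≤ x₁ ≤ −R + r, one has 2 ∫_π^{π+σ} (1/2π) · |ν(y(t))·(x − y(t))| / |x − y(t)|² · R dt ≤ 3/4. (This expresses that twice the total variation of the double-layer potential of Φ₀ with density 1 over the arc, which equals α(x)/π with α(x) the angle at x subtended by the endpoints of the arc, is at most 3/4 for r small, since the interior angle at the corner x_A is π/2.) -/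

import Mathlib

open Real Set

lemma aux_cos_bound (s : ℝ) (h0 : 0 ≤ s) (h1 : s ≤ 1/2) :
    2/5 * s^2 ≤ 1 - Real.cos s := by
  rcases eq_or_lt_of_le h0 with rfl | hs
  · simp
  · have h2 : Real.sin (s/2) ^ 2 = 1/2 - Real.cos s / 2 := by
      have := Real.sin_sq_eq_half_sub (s/2)
      rwa [mul_div_cancel₀ s (two_ne_zero)] at this
    have h3 : s/2 - (s/2)^3/4 < Real.sin (s/2) :=
      lt_of_le_of_lt (by nlinarith [pow_pos (half_pos hs) 3]) (Real.sin_gt_sub_cube (by linarith))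
    have hs2 : s^2 ≤ 1/4 := by nlinarith
    have h4 : 0 ≤ s/2 - (s/2)^3/4 := by nlinarith
    have h5 : (s/2 - (s/2)^3/4)^2 ≤ Real.sin (s/2)^2 := by
      have := pow_le_pow_left₀ h4 h3.le 2
      linarith
    nlinarith [h2, h5, mul_le_mul_of_nonneg_left hs2 (by positivity : (0:ℝ) ≤ s^2)]

lemma aux_integral (ε B p q : ℝ) (hε : 0 < ε) (hB : 0 < B) :
    ∫ t in p..q, 1/(ε^2 + B*(t-p)^2)
      = (1/(ε*Real.sqrt B)) * Real.arctan (Real.sqrt B*(q-p)/ε) := by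
  have hsB : Real.sqrt B ^ 2 = B := Real.sq_sqrt hB.le
  have hsBpos : 0 < Real.sqrt B := Real.sqrt_pos.mpr hB
  have hderiv : ∀ t ∈ uIcc p q,
      HasDerivAt (fun t => (1/(ε*Real.sqrt B)) * Real.arctan (Real.sqrt B*(t-p)/ε))
        (1/(ε^2 + B*(t-p)^2)) t := by
    intro t _
    have h1 : HasDerivAt (fun t => Real.sqrt B*(t-p)/ε) (Real.sqrt B * 1 / ε) t :=
      (((hasDerivAt_id t).sub_const p).const_mul (Real.sqrt B)).div_const ε
    have h2 := (Real.hasDerivAt_arctan (Real.sqrt B*(t-p)/ε)).comp t h1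
    have h3 := h2.const_mul (1/(ε*Real.sqrt B))
    refine h3.congr_deriv ?_
    rw [mul_one, div_pow, mul_pow, hsB]
    field_simp
  have hint : IntervalIntegrable (fun t => 1/(ε^2 + B*(t-p)^2)) MeasureTheory.volume p q := by
    apply Continuous.intervalIntegrable
    apply Continuous.div continuous_const
    · continuity
    · intro t; positivity
  rw [intervalIntegral.integral_eq_sub_of_hasDerivAt hderiv hint]
  simp [Real.arctan_zero]

set_option maxHeartbeats 1000000 in
theorem doubleLayer_corner_arc_bound (R : ℝ) (hR : 0 < R) :
    ∃ r₀ : ℝ, 0 < r₀ ∧ r₀ < R ∧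
      ∀ r : ℝ, 0 < r → r ≤ r₀ →
      ∀ σ : ℝ, 0 < σ → σ ≤ 2 * Real.arcsin (r / (2 * R)) →
      ∀ x₁ : ℝ, -R ≤ x₁ → x₁ ≤ -R + r →
        2 * ∫ t in π..(π + σ),
            (1 / (2 * π)) *
              (|Real.cos t * (x₁ - R * Real.cos t) +
                  Real.sin t * (0 - R * Real.sin t)| /
                ((x₁ - R * Real.cos t) ^ 2 + (0 - R * Real.sin t) ^ 2)) * R
          ≤ 3 / 4 := by
  have hπ := Real.pi_pos
  have hπ3 := Real.pi_gt_three
  refine ⟨R/16, by positivity, by linarith, ?_⟩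
  intro r hr hrr σ hσ hσle x₁ hx₁l hx₁r
  -- σ ≤ 1/2
  have hσhalf : σ ≤ 1/2 := by
    have hr32 : r/(2*R) ≤ 1/32 := by
      rw [div_le_div_iff₀ (by linarith) (by norm_num)]
      linarith
    have hsin14 : (1/32 : ℝ) ≤ Real.sin (1/4) := by
      have := Real.sin_gt_sub_cube (show (0:ℝ) < 1/4 by norm_num)
      linarith
    have harc : Real.arcsin (r/(2*R)) ≤ 1/4 := by
      have hq : 0 ≤ r/(2*R) := by positivity
      rw [Real.arcsin_le_iff_le_sin ⟨by linarith, by linarith⟩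
        ⟨by linarith, by linarith⟩]
      linarith
    linarith
  -- basic facts about x₁
  have hεr : x₁ + R ≤ r := by linarith
  have hε0 : 0 ≤ x₁ + R := by linarith
  have hx₁neg : x₁ ≤ -(15/16*R) := by linarith
  have ha : 15/16*R ≤ -x₁ := by linarith
  have haR : -x₁ ≤ R := by linarith
  -- numerator and denominator identities (for every t)
  have hnum : ∀ t : ℝ, Real.cos t * (x₁ - R * Real.cos t) +
      Real.sin t * (0 - R * Real.sin t) = x₁ * Real.cos t - R := by
    intro t
    linear_combination (-R) * (Real.sin_sq_add_cos_sq t)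
  have hden : ∀ t : ℝ, (x₁ - R * Real.cos t) ^ 2 + (0 - R * Real.sin t) ^ 2
      = (x₁+R)^2 + 2*(-x₁)*R*(1+Real.cos t) := by
    intro t
    linear_combination (R^2) * (Real.sin_sq_add_cos_sq t)
  have habs : ∀ t : ℝ, |x₁ * Real.cos t - R| = R - x₁ * Real.cos t := by
    intro t
    rw [abs_of_nonpos]
    · ring
    · nlinarith [Real.neg_one_le_cos t, Real.cos_le_one t]
  -- the key cosine lower bound on the interval
  have hucos : ∀ t ∈ Icc π (π+σ), 2/5*(t-π)^2 ≤ 1 + Real.cos t := by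
    intro t ht
    have h1 : Real.cos t = -Real.cos (t - π) := by
      rw [← Real.cos_add_pi (t - π), sub_add_cancel]
    have := aux_cos_bound (t-π) (by linarith [ht.1]) (by linarith [ht.2, hσhalf])
    rw [h1]; linarith
  rcases eq_or_lt_of_le hε0 with hεz | hεpos
  · -- case x₁ = -R : integrand is a.e. 1/(4π)
    have hx₁ : x₁ = -R := by linarith
    have hcongr : ∀ t ∈ Set.uIoc π (π+σ), (1 / (2 * π)) *
        (|Real.cos t * (x₁ - R * Real.cos t) + Real.sin t * (0 - R * Real.sin t)| /
          ((x₁ - R * Real.cos t) ^ 2 + (0 - R * Real.sin t) ^ 2)) * R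
        = 1/(4*π) := by
      intro t ht
      rw [Set.uIoc_of_le (by linarith)] at ht
      have hu : 0 < 1 + Real.cos t := by
        have := hucos t ⟨ht.1.le, ht.2⟩
        have hts : 0 < t - π := by linarith [ht.1]
        nlinarith
      rw [hnum, habs, hden, hx₁]
      have h1 : R - (-R) * Real.cos t = R * (1 + Real.cos t) := by ring
      have h2 : (-R+R)^2 + 2*(-(-R))*R*(1+Real.cos t) = 2*R^2*(1+Real.cos t) := by ring
      rw [h1, h2]
      field_simp
      ring
    rw [intervalIntegral.integral_congr_ae (MeasureTheory.ae_of_all _ hcongr)]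
    rw [intervalIntegral.integral_const]
    simp only [add_sub_cancel_left, smul_eq_mul]
    have h1 : (1:ℝ)/(4*π) ≤ 1/12 := by
      rw [div_le_div_iff₀ (by linarith) (by norm_num)]; linarith
    have h2 : (0:ℝ) ≤ 1/(4*π) := by positivity
    nlinarith
  · -- main case x₁ + R > 0
    set ε := x₁ + R with hεdef
    set B := 4/5 * (-x₁) * R with hBdef
    have hB : 0 < B := by nlinarith
    have hsB : 0 < Real.sqrt B := Real.sqrt_pos.mpr hB
    -- positivity of true denominator
    have hdpos : ∀ t : ℝ, 0 < (x₁ - R * Real.cos t) ^ 2 + (0 - R * Real.sin t) ^ 2 := by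
      intro t
      rw [hden]
      nlinarith [Real.neg_one_le_cos t]
    -- the comparison function
    set g : ℝ → ℝ := fun t => (R*ε/(2*π)) * (1/(ε^2 + B*(t-π)^2)) + (1/(2*π))*(1/(2*R))*R
      with hgdef
    -- pointwise bound
    have hle : ∀ t ∈ Icc π (π+σ),
        (1 / (2 * π)) *
          (|Real.cos t * (x₁ - R * Real.cos t) + Real.sin t * (0 - R * Real.sin t)| /
            ((x₁ - R * Real.cos t) ^ 2 + (0 - R * Real.sin t) ^ 2)) * R ≤ g t := by
      intro t ht
      rw [hnum, habs, hden]
      have hu0 : 0 ≤ 1 + Real.cos t := by nlinarith [Real.neg_one_le_cos t]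
      have hus := hucos t ht
      have hd1 : 0 < ε^2 + 2*(-x₁)*R*(1+Real.cos t) := by nlinarith
      have hd2 : 0 < ε^2 + B*(t-π)^2 := by positivity
      have hmono : ε^2 + B*(t-π)^2 ≤ ε^2 + 2*(-x₁)*R*(1+Real.cos t) := by nlinarith
      have hsplit : R - x₁ * Real.cos t = ε + (-x₁)*(1+Real.cos t) := by
        rw [hεdef]; ring
      have hT1 : ε/(ε^2 + 2*(-x₁)*R*(1+Real.cos t)) ≤ ε/(ε^2 + B*(t-π)^2) :=
        div_le_div_of_nonneg_left hε0 hd2 hmono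
      have hT2 : (-x₁)*(1+Real.cos t)/(ε^2 + 2*(-x₁)*R*(1+Real.cos t)) ≤ 1/(2*R) := by
        rw [div_le_div_iff₀ hd1 (by linarith)]
        nlinarith
      have hkey : (R - x₁ * Real.cos t)/((x₁+R)^2 + 2*(-x₁)*R*(1+Real.cos t))
          ≤ ε/(ε^2 + B*(t-π)^2) + 1/(2*R) := by
        rw [hsplit, show ((x₁+R)^2 : ℝ) = ε^2 by rw [hεdef], add_div]
        exact add_le_add hT1 hT2
      calc (1 / (2 * π)) * ((R - x₁ * Real.cos t) /
              ((x₁+R)^2 + 2*(-x₁)*R*(1+Real.cos t))) * R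
          ≤ (1 / (2 * π)) * (ε/(ε^2 + B*(t-π)^2) + 1/(2*R)) * R := by
            apply mul_le_mul_of_nonneg_right _ hR.le
            apply mul_le_mul_of_nonneg_left hkey (by positivity)
        _ = g t := by rw [hgdef]; ring
    -- integrability
    have hFcont : Continuous (fun t => (1 / (2 * π)) *
        (|Real.cos t * (x₁ - R * Real.cos t) + Real.sin t * (0 - R * Real.sin t)| /
          ((x₁ - R * Real.cos t) ^ 2 + (0 - R * Real.sin t) ^ 2)) * R) := by
      apply Continuous.mul _ continuous_const
      apply Continuous.mul continuous_const
      apply Continuous.div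
      · exact ((Real.continuous_cos.mul (continuous_const.sub
          (continuous_const.mul Real.continuous_cos))).add
          (Real.continuous_sin.mul (continuous_const.sub
          (continuous_const.mul Real.continuous_sin)))).abs
      · exact ((continuous_const.sub (continuous_const.mul Real.continuous_cos)).pow 2).add
          ((continuous_const.sub (continuous_const.mul Real.continuous_sin)).pow 2)
      · exact fun t => (hdpos t).ne'
    have hGcont : Continuous g := by
      rw [hgdef]
      apply Continuous.add _ continuous_const
      apply Continuous.mul continuous_const
      apply Continuous.div continuous_const
      · exact continuous_const.add (continuous_const.mul
          ((continuous_id.sub continuous_const).pow 2))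
      · exact fun t => by positivity
    have hmono := intervalIntegral.integral_mono_on (μ := MeasureTheory.volume) (by linarith : π ≤ π + σ)
      (hFcont.intervalIntegrable _ _) (hGcont.intervalIntegrable _ _) hle
    -- compute the integral of g
    have hg1int : IntervalIntegrable (fun t => (R*ε/(2*π)) * (1/(ε^2 + B*(t-π)^2)))
        MeasureTheory.volume π (π+σ) := by
      apply Continuous.intervalIntegrable
      apply Continuous.mul continuous_const
      apply Continuous.div continuous_const
      · exact continuous_const.add (continuous_const.mul
          ((continuous_id.sub continuous_const).pow 2))
      · exact fun t => by positivity
    have hgval : ∫ t in π..(π+σ), g t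
        = (R*ε/(2*π)) * ((1/(ε*Real.sqrt B)) * Real.arctan (Real.sqrt B*σ/ε))
          + σ * ((1/(2*π))*(1/(2*R))*R) := by
      rw [hgdef]
      rw [intervalIntegral.integral_add hg1int
        (intervalIntegrable_const (μ := MeasureTheory.volume))]
      rw [intervalIntegral.integral_const_mul, aux_integral ε B π (π+σ) hεpos hB,
        intervalIntegral.integral_const]
      simp only [add_sub_cancel_left, smul_eq_mul]
    -- bound the integral of g
    have harctan : Real.arctan (Real.sqrt B*σ/ε) ≤ π/2 :=
      (Real.arctan_lt_pi_div_two _).le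
    have harctan0 : 0 ≤ Real.arctan (Real.sqrt B*σ/ε) := by
      rw [← Real.arctan_zero]
      exact Real.arctan_strictMono.monotone (by positivity)
    have hsqBlow : 0.86*R ≤ Real.sqrt B := by
      rw [show (0.86*R : ℝ) = Real.sqrt ((0.86*R)^2) by
        rw [Real.sqrt_sq (by positivity)]]
      apply Real.sqrt_le_sqrt
      rw [hBdef]; nlinarith
    have hgbound : ∫ t in π..(π+σ), g t ≤ R/(4*Real.sqrt B) + σ/(4*π) := by
      rw [hgval]
      have h1 : (R*ε/(2*π)) * ((1/(ε*Real.sqrt B)) * Real.arctan (Real.sqrt B*σ/ε))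
          ≤ (R*ε/(2*π)) * ((1/(ε*Real.sqrt B)) * (π/2)) := by
        apply mul_le_mul_of_nonneg_left _ (by positivity)
        apply mul_le_mul_of_nonneg_left harctan (by positivity)
      have h2 : (R*ε/(2*π)) * ((1/(ε*Real.sqrt B)) * (π/2)) = R/(4*Real.sqrt B) := by
        field_simp
        ring
      have h3 : σ * ((1/(2*π))*(1/(2*R))*R) = σ/(4*π) := by
        field_simp
        ring
      rw [h3]
      linarith [h1, h2.le, h2.ge]
    -- final numeric estimate
    have hfrac : R/(4*Real.sqrt B) ≤ R/(4*(0.86*R)) := by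
      apply div_le_div_of_nonneg_left hR.le (by positivity)
      nlinarith
    have hfrac2 : R/(4*(0.86*R)) = 1/3.44 := by
      rw [div_eq_div_iff (by positivity) (by norm_num)]
      ring
    have hσπ : σ/(4*π) ≤ 1/24 := by
      rw [div_le_div_iff₀ (by positivity) (by norm_num)]
      nlinarith
    linarith [hmono, hgbound]
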